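/- NC_A(n,d) admits a length function: each nonzero word in the generators, when written in standard form T_w T_n^k T_{n-1} ⋯ T_m, has length ℓ_{A_{n-1}}(w) + k + n - m equal to the number of generator factors in the original word; in particular, any two expressions of the same nonzero element as products of generators use the same number of generators. -/

import Mathlib

/-- Relations of the generalized nil-Coxeter algebra `NC_A(n,d)` on generators
`T_1, …, T_n` (0-indexed by `Fin n`): type-`A_n` braid relations,
`T_i^2 = 0` for `i < n`, and `T_n^d = 0`. -/
inductive NCRel (k : Type) [CommRing k] (n d : ℕ) :
    FreeAlgebra k (Fin n) → FreeAlgebra k (Fin n) → Prop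
  | braid (i j : Fin n) (h : (i : ℕ) + 1 = j) :
      NCRel k n d (FreeAlgebra.ι k i * FreeAlgebra.ι k j * FreeAlgebra.ι k i)
        (FreeAlgebra.ι k j * FreeAlgebra.ι k i * FreeAlgebra.ι k j)
  | comm (i j : Fin n) (h : (i : ℕ) + 1 < j) :
      NCRel k n d (FreeAlgebra.ι k i * FreeAlgebra.ι k j)
        (FreeAlgebra.ι k j * FreeAlgebra.ι k i)
  | sq (i : Fin n) (h : (i : ℕ) + 1 < n) : NCRel k n d (FreeAlgebra.ι k i ^ 2) 0
  | last (i : Fin n) (h : (i : ℕ) + 1 = n) : NCRel k n d (FreeAlgebra.ι k i ^ d) 0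

/-- The generalized nil-Coxeter algebra `NC_A(n,d)`. -/
abbrev NCA (k : Type) [CommRing k] (n d : ℕ) := RingQuot (NCRel k n d)

/-- The generator `T_j` (1-indexed, for `1 ≤ j ≤ n`) of `NC_A(n,d)`. -/
noncomputable def Tg (k : Type) [CommRing k] (n d : ℕ) (j : ℕ) : NCA k n d :=
  if h : 1 ≤ j ∧ j ≤ n then
    RingQuot.mkAlgHom k (NCRel k n d) (FreeAlgebra.ι k ⟨j - 1, by omega⟩) else 1

/-- The descending product `T_{n-1} T_{n-2} ⋯ T_m` in `NC_A(n,d)`. -/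
noncomputable def descT (k : Type) [CommRing k] (n d : ℕ) (m : ℕ) : NCA k n d :=
  ((List.range' m (n - m)).reverse.map (Tg k n d)).prod

/-- The product of generators `T_{j}` along a (1-indexed) word `l`. -/
noncomputable def TwOf (k : Type) [CommRing k] (n d : ℕ) (l : List ℕ) : NCA k n d :=
  (l.map (Tg k n d)).prod

/-- The simple transposition `s_j = (j, j+1)` (1-indexed) in the symmetric group
on `{1, …, n}`, realized as `Equiv.Perm (Fin n)`. -/
def sp (n : ℕ) (j : ℕ) : Equiv.Perm (Fin n) :=
  if h : 1 ≤ j ∧ j < n then Equiv.swap ⟨j - 1, by omega⟩ ⟨j, h.2⟩ else 1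

/-- `l` is a reduced word for `w ∈ S_n` in the simple transpositions `s_1, …, s_{n-1}`. -/
def IsRedWord (n : ℕ) (w : Equiv.Perm (Fin n)) (l : List ℕ) : Prop :=
  (∀ j ∈ l, 1 ≤ j ∧ j < n) ∧ (l.map (sp n)).prod = w ∧
    ∀ l' : List ℕ, (∀ j ∈ l', 1 ≤ j ∧ j < n) → (l'.map (sp n)).prod = w →
      l.length ≤ l'.length


section Aux

open Polynomial

lemma CX_mul {R : Type*} [Semiring R] (a b : R) (p q : ℕ) :
    (C a * X ^ p) * (C b * X ^ q) = C (a * b) * X ^ (p + q) := by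
  rw [mul_assoc, ← mul_assoc (X ^ p), X_pow_mul, mul_assoc, ← pow_add, ← mul_assoc, ← C_mul]

lemma CX_pow {R : Type*} [Semiring R] (a : R) (m : ℕ) :
    (C a * X) ^ m = C (a ^ m) * X ^ m := by
  induction m with
  | zero => simp
  | succ m ih =>
      rw [pow_succ, ih]
      have := CX_mul (a ^ m) a m 1
      rw [pow_one] at this
      rw [this, ← pow_succ]

lemma CX_mul_one {R : Type*} [Semiring R] (a b : R) (q : ℕ) :
    (C a * X) * (C b * X ^ q) = C (a * b) * X ^ (q + 1) := by
  have h := CX_mul a b 1 q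
  rw [pow_one] at h
  rw [h, add_comm]

/-- The grading homomorphism `NCA → Polynomial NCA`, `T_i ↦ C T_i * X`. -/
noncomputable def lenHom (k : Type) [CommRing k] (n d : ℕ) :
    NCA k n d →ₐ[k] Polynomial (NCA k n d) :=
  RingQuot.liftAlgHom k ⟨FreeAlgebra.lift k
      (fun i => C (RingQuot.mkAlgHom k (NCRel k n d) (FreeAlgebra.ι k i)) * X),
    by
      intro x y h
      induction h with
      | braid i j hij =>
          simp only [map_mul, FreeAlgebra.lift_ι_apply]
          rw [show (X : Polynomial (NCA k n d)) = X ^ 1 from (pow_one X).symm,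
            CX_mul, CX_mul, CX_mul, CX_mul]
          rw [← map_mul, ← map_mul, ← map_mul, ← map_mul,
            RingQuot.mkAlgHom_rel k (NCRel.braid i j hij)]
      | comm i j hij =>
          simp only [map_mul, FreeAlgebra.lift_ι_apply]
          rw [show (X : Polynomial (NCA k n d)) = X ^ 1 from (pow_one X).symm,
            CX_mul, CX_mul]
          rw [← map_mul, ← map_mul, RingQuot.mkAlgHom_rel k (NCRel.comm i j hij)]
      | sq i hi =>
          simp only [map_pow, FreeAlgebra.lift_ι_apply, map_zero]
          rw [CX_pow, ← map_pow, RingQuot.mkAlgHom_rel k (NCRel.sq i hi)]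
          simp
      | last i hi =>
          simp only [map_pow, FreeAlgebra.lift_ι_apply, map_zero]
          rw [CX_pow, ← map_pow, RingQuot.mkAlgHom_rel k (NCRel.last i hi)]
          simp⟩

lemma lenHom_Tg (k : Type) [CommRing k] (n d : ℕ) (j : ℕ) (hj : 1 ≤ j ∧ j ≤ n) :
    lenHom k n d (Tg k n d j) = C (Tg k n d j) * X := by
  rw [Tg, dif_pos hj, lenHom, RingQuot.liftAlgHom_mkAlgHom_apply, FreeAlgebra.lift_ι_apply]

lemma lenHom_TwOf (k : Type) [CommRing k] (n d : ℕ) (l : List ℕ)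
    (hl : ∀ j ∈ l, 1 ≤ j ∧ j ≤ n) :
    lenHom k n d (TwOf k n d l) = C (TwOf k n d l) * X ^ l.length := by
  induction l with
  | nil => simp [TwOf]
  | cons j l ih =>
      have hj := hl j List.mem_cons_self
      have hl' : ∀ i ∈ l, 1 ≤ i ∧ i ≤ n := fun i hi => hl i (List.mem_cons_of_mem _ hi)
      have hcons : TwOf k n d (j :: l) = Tg k n d j * TwOf k n d l := by
        simp [TwOf]
      rw [hcons, map_mul, ih hl', lenHom_Tg k n d j hj, CX_mul_one, ← hcons]
      rfl

lemma TwOf_append (k : Type) [CommRing k] (n d : ℕ) (l₁ l₂ : List ℕ) :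
    TwOf k n d (l₁ ++ l₂) = TwOf k n d l₁ * TwOf k n d l₂ := by
  simp [TwOf]

end Aux

/-- `NC_A(n,d)` admits a length function: a nonzero word in the generators written in
standard form `T_w T_n^{k_0} T_{n-1} ⋯ T_m` has `ℓ_{A_{n-1}}(w) + k_0 + (n - m)`
generator factors; in particular, any two generator-expressions of the same nonzero
element have the same number of generator factors. -/
theorem NCA_length_function (k : Type) [CommRing k] (n d : ℕ) (hn : 1 ≤ n) (hd : 2 ≤ d) :
    (∀ (l : List ℕ), (∀ j ∈ l, 1 ≤ j ∧ j ≤ n) → TwOf k n d l ≠ 0 →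
      ∀ (w : Equiv.Perm (Fin n)) (lw : List ℕ) (k0 m : ℕ),
        IsRedWord n w lw → 1 ≤ k0 → k0 ≤ d - 1 → 1 ≤ m → m ≤ n →
        TwOf k n d l = TwOf k n d lw * Tg k n d n ^ k0 * descT k n d m →
        l.length = lw.length + k0 + (n - m)) ∧
    ∀ (l₁ l₂ : List ℕ), (∀ j ∈ l₁, 1 ≤ j ∧ j ≤ n) → (∀ j ∈ l₂, 1 ≤ j ∧ j ≤ n) →
      TwOf k n d l₁ = TwOf k n d l₂ → TwOf k n d l₁ ≠ 0 → l₁.length = l₂.length := by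
  have key : ∀ (l₁ l₂ : List ℕ), (∀ j ∈ l₁, 1 ≤ j ∧ j ≤ n) → (∀ j ∈ l₂, 1 ≤ j ∧ j ≤ n) →
      TwOf k n d l₁ = TwOf k n d l₂ → TwOf k n d l₁ ≠ 0 → l₁.length = l₂.length := by
    intro l₁ l₂ h1 h2 heq hne
    have e1 := lenHom_TwOf k n d l₁ h1
    have e2 := lenHom_TwOf k n d l₂ h2
    rw [heq] at e1
    rw [heq] at hne
    have e3 := e1.symm.trans e2
    by_contra hlen
    have hne' : l₂.length ≠ l₁.length := fun h => hlen h.symm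
    have := congrArg (fun p => Polynomial.coeff p l₂.length) e3
    simp [Polynomial.coeff_C_mul, Polynomial.coeff_X_pow, hne'] at this
    exact hne this.symm
  refine ⟨?_, key⟩
  intro l hl hne w lw k0 m hrw hk0 hk0' hm hmn heq
  set l' : List ℕ := lw ++ (List.replicate k0 n ++ (List.range' m (n - m)).reverse) with hl'
  have hrepl : TwOf k n d (List.replicate k0 n) = Tg k n d n ^ k0 := by
    simp [TwOf, List.map_replicate, List.prod_replicate]
  have hdesc : TwOf k n d ((List.range' m (n - m)).reverse) = descT k n d m := rfl
  have heq' : TwOf k n d l = TwOf k n d l' := by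
    rw [hl', TwOf_append, TwOf_append, hrepl, hdesc, heq, mul_assoc]
  have hbound : ∀ j ∈ l', 1 ≤ j ∧ j ≤ n := by
    intro j hj
    rw [hl'] at hj
    simp only [List.mem_append, List.mem_replicate, List.mem_reverse,
      List.mem_range'] at hj
    rcases hj with hj | hj | hj
    · exact ⟨(hrw.1 j hj).1, le_of_lt (hrw.1 j hj).2⟩
    · omega
    · omega
  have := key l l' hl hbound heq' hne
  rw [this, hl']
  simp only [List.length_append, List.length_replicate, List.length_reverse,
    List.length_range']
  omega
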